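/- For every positive integer k and all nonzero real x, the identity ∑_{n+m=k} x^m · L_{n,m}(x, 1/x) = L_k(1) · (1 + x)^k holds, where the sum is over pairs (n,m) of nonnegative integers with n + m = k and L_k is the classical Laguerre polynomial. -/

import Mathlib

open Finset

noncomputable def L2 (n m : ℕ) (x y : ℝ) : ℝ :=
  ∑ i ∈ Finset.range (m+1), ∑ s ∈ Finset.range (n+1),
    ((-1:ℝ)^(i+s) / ((Nat.factorial i) * (Nat.factorial s))) *
      ((m+n).choose (m-i)) * ((n+i).choose (n-s)) * x^s * y^i


noncomputable def Lag (n α : ℕ) (x : ℝ) : ℝ :=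
  ∑ j ∈ Finset.range (n+1), ((-1:ℝ)^j / (Nat.factorial j)) * ((n+α).choose (n-j)) * x^j

lemma tri (k : ℕ) (f : ℕ → ℕ → ℝ) :
    ∑ n ∈ range (k+1), ∑ a ∈ range (k-n+1), f n a
      = ∑ a ∈ range (k+1), ∑ n ∈ range (k-a+1), f n a := by
  rw [Finset.sum_sigma', Finset.sum_sigma']
  refine Finset.sum_nbij' (fun x => ⟨x.2, x.1⟩) (fun x => ⟨x.2, x.1⟩) ?_ ?_
    (fun _ _ => rfl) (fun _ _ => rfl) (fun _ _ => rfl) <;>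
  · simp only [Finset.mem_range, Sigma.forall, Finset.mem_sigma]
    intro a b h
    omega

lemma sqr (K : ℕ) (F : ℕ → ℕ → ℝ) :
    ∑ i ∈ range (K+1), ∑ s ∈ range (K-i+1), F i s
      = ∑ j ∈ range (K+1), ∑ s ∈ range (j+1), F (j-s) s := by
  rw [Finset.sum_sigma', Finset.sum_sigma']
  refine Finset.sum_nbij' (fun ⟨i, s⟩ => ⟨i + s, s⟩) (fun ⟨j, s⟩ => ⟨j - s, s⟩) ?_ ?_ ?_ ?_ ?_ <;>
  · simp only [Finset.mem_range, Sigma.forall, Finset.mem_sigma, Sigma.ext_iff, heq_eq_eq,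
      Nat.add_sub_cancel]
    intro a b h
    first
    | trivial
    | omega
    | exact ⟨by omega, trivial⟩

lemma binom_fact (x : ℝ) (j : ℕ) :
    ∑ s ∈ range (j+1), x^s * (1 / ((Nat.factorial (j-s)) * (Nat.factorial s)) : ℝ)
      = (1+x)^j / (Nat.factorial j) := by
  have hj : ((Nat.factorial j : ℝ)) ≠ 0 := Nat.cast_ne_zero.2 (Nat.factorial_ne_zero j)
  rw [eq_div_iff hj, Finset.sum_mul, add_comm (1:ℝ) x, add_pow]
  refine Finset.sum_congr rfl fun s hs => ?_
  have hs' : s ≤ j := by simpa [Nat.lt_succ_iff] using Finset.mem_range.1 hs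
  have hfact : ((j.choose s : ℝ)) * (Nat.factorial s) * (Nat.factorial (j-s))
      = (Nat.factorial j) := by
    exact_mod_cast Nat.choose_mul_factorial_mul_factorial hs'
  rw [one_pow, mul_one, ← hfact]
  have h1 : ((Nat.factorial s : ℝ)) ≠ 0 := Nat.cast_ne_zero.2 (Nat.factorial_ne_zero s)
  have h2 : ((Nat.factorial (j-s) : ℝ)) ≠ 0 := Nat.cast_ne_zero.2 (Nat.factorial_ne_zero (j-s))
  field_simp

lemma chch (k a j : ℕ) (h : a + j ≤ k) :
    (k.choose a) * ((k-a).choose j) = (k.choose j) * ((k-j).choose a) := by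
  have h1 := Nat.choose_mul (n := k) (Nat.le_add_right a j)
  have h2 := Nat.choose_mul (n := k) (Nat.le_add_left j a)
  rw [Nat.add_sub_cancel_left] at h1
  rw [Nat.add_sub_cancel] at h2
  rw [← h1, ← h2, Nat.choose_symm_add]

theorem stmt16 (k : ℕ) (hk : 1 ≤ k) (x : ℝ) (hx : x ≠ 0) :
    ∑ n ∈ Finset.range (k+1), x^(k-n) * L2 n (k-n) x (1/x) =
      Lag k 0 1 * (1 + x)^k := by
  have step1 : ∀ n ∈ Finset.range (k+1),
      x^(k-n) * L2 n (k-n) x (1/x) =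
      ∑ a ∈ Finset.range (k-n+1), ∑ s ∈ Finset.range (n+1),
        ((-1:ℝ)^((k-a-n)+s) / ((Nat.factorial (k-a-n)) * (Nat.factorial s))) *
          (k.choose a) * ((k-a).choose (n-s)) * x^a * x^s := by
    intro n hn
    have hn' : n ≤ k := by simpa [Nat.lt_succ_iff] using Finset.mem_range.1 hn
    unfold L2
    rw [Finset.mul_sum]
    rw [← Finset.sum_range_reflect (fun i => x^(k-n) * ∑ s ∈ Finset.range (n+1),
      ((-1:ℝ)^(i+s) / ((Nat.factorial i) * (Nat.factorial s))) *
        (((k-n)+n).choose ((k-n)-i)) * ((n+i).choose (n-s)) * x^s * (1/x)^i) (k-n+1)]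
    refine Finset.sum_congr rfl fun a ha => ?_
    have ha' : a ≤ k - n := by simpa [Nat.lt_succ_iff] using Finset.mem_range.1 ha
    simp only [Nat.add_sub_cancel]
    rw [Finset.mul_sum]
    refine Finset.sum_congr rfl fun s hs => ?_
    have e1 : (k-n) + n = k := by omega
    have e2 : (k-n) - (k-n-a) = a := by omega
    have e3 : n + (k-n-a) = k - a := by omega
    have e4 : k - n - a = k - a - n := by omega
    rw [e1, e2, e3, e4]
    have hsplit : x^(k-n) = x^a * x^(k-a-n) := by rw [← pow_add]; congr 1; omega
    have hinv : x^(k-a-n) * (x^(k-a-n))⁻¹ = 1 := mul_inv_cancel₀ (pow_ne_zero _ hx)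
    rw [hsplit, one_div, inv_pow]
    set c : ℝ := (-1:ℝ)^((k-a-n)+s) / ((Nat.factorial (k-a-n)) * (Nat.factorial s)) *
      (k.choose a) * ((k-a).choose (n-s)) with hc
    linear_combination (c * x^a * x^s) * hinv
  rw [Finset.sum_congr rfl step1]
  rw [tri k (fun n a => ∑ s ∈ Finset.range (n+1),
      ((-1:ℝ)^((k-a-n)+s) / ((Nat.factorial (k-a-n)) * (Nat.factorial s))) *
        (k.choose a) * ((k-a).choose (n-s)) * x^a * x^s)]
  have step2 : ∀ a ∈ Finset.range (k+1),
      (∑ n ∈ Finset.range (k-a+1), ∑ s ∈ Finset.range (n+1),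
        ((-1:ℝ)^((k-a-n)+s) / ((Nat.factorial (k-a-n)) * (Nat.factorial s))) *
          (k.choose a) * ((k-a).choose (n-s)) * x^a * x^s)
      = ∑ j ∈ Finset.range (k-a+1),
          ((-1:ℝ)^j / (Nat.factorial j)) * ((k.choose a) * ((k-a).choose j)) * x^a * (1+x)^j := by
    intro a ha
    have ha' : a ≤ k := by simpa [Nat.lt_succ_iff] using Finset.mem_range.1 ha
    set K := k - a with hK
    rw [← Finset.sum_range_reflect (fun n => ∑ s ∈ Finset.range (n+1),
      ((-1:ℝ)^((K-n)+s) / ((Nat.factorial (K-n)) * (Nat.factorial s))) *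
        (k.choose a) * (K.choose (n-s)) * x^a * x^s) (K+1)]
    simp only [Nat.add_sub_cancel]
    have hF : ∀ i ∈ Finset.range (K+1),
        (∑ s ∈ Finset.range ((K-i)+1),
          ((-1:ℝ)^((K-(K-i))+s) / ((Nat.factorial (K-(K-i))) * (Nat.factorial s))) *
            (k.choose a) * (K.choose ((K-i)-s)) * x^a * x^s)
        = ∑ s ∈ Finset.range ((K-i)+1),
          ((-1:ℝ)^(i+s) / ((Nat.factorial i) * (Nat.factorial s))) *
            (k.choose a) * (K.choose (K-i-s)) * x^a * x^s := by
      intro i hi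
      have hi' : i ≤ K := by simpa [Nat.lt_succ_iff] using Finset.mem_range.1 hi
      have e : K - (K - i) = i := by omega
      rw [e]
    rw [Finset.sum_congr rfl hF]
    rw [sqr K (fun i s => ((-1:ℝ)^(i+s) / ((Nat.factorial i) * (Nat.factorial s))) *
        (k.choose a) * (K.choose (K-i-s)) * x^a * x^s)]
    refine Finset.sum_congr rfl fun j hj => ?_
    have hj' : j ≤ K := by simpa [Nat.lt_succ_iff] using Finset.mem_range.1 hj
    have hstep : ∀ s ∈ Finset.range (j+1),
        ((-1:ℝ)^((j-s)+s) / ((Nat.factorial (j-s)) * (Nat.factorial s))) *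
          (k.choose a) * (K.choose (K-(j-s)-s)) * x^a * x^s
        = (x^s * (1 / ((Nat.factorial (j-s)) * (Nat.factorial s)))) *
          ((-1:ℝ)^j * (k.choose a) * (K.choose j) * x^a) := by
      intro s hs
      have hs' : s ≤ j := by simpa [Nat.lt_succ_iff] using Finset.mem_range.1 hs
      have e1 : (j-s)+s = j := by omega
      have e2 : K-(j-s)-s = K-j := by omega
      rw [e1, e2, Nat.choose_symm hj']
      ring
    rw [Finset.sum_congr rfl hstep, ← Finset.sum_mul, binom_fact]
    ring
  rw [Finset.sum_congr rfl step2]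
  rw [tri k (fun a j => ((-1:ℝ)^j / (Nat.factorial j)) *
      ((k.choose a) * ((k-a).choose j)) * x^a * (1+x)^j)]
  have step3 : ∀ j ∈ Finset.range (k+1),
      (∑ a ∈ Finset.range (k-j+1),
        ((-1:ℝ)^j / (Nat.factorial j)) * ((k.choose a) * ((k-a).choose j)) * x^a * (1+x)^j)
      = (((-1:ℝ)^j / (Nat.factorial j)) * (k.choose j)) * (1+x)^k := by
    intro j hj
    have hj' : j ≤ k := by simpa [Nat.lt_succ_iff] using Finset.mem_range.1 hj
    have hterm : ∀ a ∈ Finset.range (k-j+1),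
        ((-1:ℝ)^j / (Nat.factorial j)) * ((k.choose a) * ((k-a).choose j)) * x^a * (1+x)^j
        = (x^a * (1:ℝ)^(k-j-a) * ((k-j).choose a)) *
          (((-1:ℝ)^j / (Nat.factorial j)) * (k.choose j) * (1+x)^j) := by
      intro a ha
      have ha' : a ≤ k - j := by simpa [Nat.lt_succ_iff] using Finset.mem_range.1 ha
      have hc : ((k.choose a : ℝ)) * ((k-a).choose j) = ((k.choose j : ℝ)) * ((k-j).choose a) := by
        exact_mod_cast chch k a j (by omega)
      rw [mul_assoc ((-1:ℝ)^j / (Nat.factorial j)), mul_assoc, hc]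
      ring
    rw [Finset.sum_congr rfl hterm, ← Finset.sum_mul, ← add_pow]
    have : (x + 1)^(k-j) * (1+x)^j = (1+x)^k := by
      rw [add_comm x 1, ← pow_add]
      congr 1
      omega
    linear_combination ((-1:ℝ)^j / (Nat.factorial j) * (k.choose j)) * this
  rw [Finset.sum_congr rfl step3]
  unfold Lag
  rw [Finset.sum_mul]
  refine Finset.sum_congr rfl fun j hj => ?_
  have hj' : j ≤ k := by simpa [Nat.lt_succ_iff] using Finset.mem_range.1 hj
  rw [Nat.add_zero, Nat.choose_symm hj', one_pow, mul_one]
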